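/- Let K ⊆ ℝ^d be closed and convex, let f₁,…,f_n : K → ℝ be strictly convex functions each attaining a minimum on K, and let g = Σᵢ λᵢ fᵢ with λᵢ ≥ 0 and Σᵢ λᵢ = 1. Then there exist at most d+1 indices i₁,…,i_{d+1} and nonnegative coefficients α₁,…,α_{d+1} summing to 1 such that g' = Σⱼ αⱼ f_{iⱼ} satisfies: the minimizer of g' on K equals the minimizer of g on K, and min_K g' ≤ min_K g. -/

import Mathlib

open Finset Module RealInnerProductSpace

private lemma lemC {V : Type*} [NormedAddCommGroup V] [NormedSpace ℝ V]
    [FiniteDimensional ℝ V] {n : ℕ} (v : Fin n → V) (c : Fin n → ℝ) :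
    ∀ (T : Finset (Fin n)) (lam : Fin n → ℝ), (∀ i, 0 ≤ lam i) → (∀ i ∉ T, lam i = 0) →
    ∃ (α : Fin n → ℝ) (T' : Finset (Fin n)), T' ⊆ T ∧ T'.card ≤ finrank ℝ V + 1 ∧
      (∀ i, 0 ≤ α i) ∧ (∀ i ∉ T', α i = 0) ∧ (∑ i, α i = ∑ i, lam i) ∧
      (∑ i, α i • v i = ∑ i, lam i • v i) ∧ (∑ i, α i * c i ≤ ∑ i, lam i * c i) := by
  classical
  intro T
  induction T using Finset.strongInduction with
  | _ T ih =>
    intro lam hlam0 hsupp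
    by_cases hcard : T.card ≤ finrank ℝ V + 1
    · exact ⟨lam, T, Finset.Subset.refl _, hcard, hlam0, hsupp, rfl, rfl, le_rfl⟩
    by_cases hzero : ∃ i ∈ T, lam i = 0
    · obtain ⟨i₀, hi₀, hlz⟩ := hzero
      have hss : T.erase i₀ ⊂ T := Finset.erase_ssubset hi₀
      have hsupp' : ∀ i ∉ T.erase i₀, lam i = 0 := by
        intro i hi
        by_cases h : i = i₀
        · rw [h]; exact hlz
        · exact hsupp i fun hT => hi (Finset.mem_erase.mpr ⟨h, hT⟩)
      obtain ⟨α, T', h1, h2, h3, h4, h5, h6, h7⟩ := ih _ hss lam hlam0 hsupp'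
      exact ⟨α, T', h1.trans (Finset.erase_subset _ _), h2, h3, h4, h5, h6, h7⟩
    · push_neg at hzero
      have hpos : ∀ i ∈ T, 0 < lam i := fun i hi => (hlam0 i).lt_of_ne' (hzero i hi)
      have hcard' : finrank ℝ (V × ℝ) < Fintype.card ↥T := by
        rw [Module.finrank_prod, finrank_self, Fintype.card_coe]
        omega
      have hdep : ¬ LinearIndependent ℝ (fun i : ↥T => ((v i.1, (1 : ℝ)) : V × ℝ)) := by
        intro h
        exact absurd h.fintype_card_le_finrank (not_le.mpr hcard')
      rw [Fintype.not_linearIndependent_iff] at hdep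
      obtain ⟨mu0, hrel, j0, hj0⟩ := hdep
      set mu : Fin n → ℝ := fun i => if h : i ∈ T then mu0 ⟨i, h⟩ else 0 with hmu
      have hmusupp : ∀ i ∉ T, mu i = 0 := fun i hi => dif_neg hi
      have hmuT : ∀ (i : ↥T), mu i.1 = mu0 i := fun i => dif_pos i.2
      have hrel1 : ∑ i ∈ T, mu i • v i = 0 := by
        have h1 := congrArg Prod.fst hrel
        rw [Prod.fst_sum] at h1
        simp only [Prod.smul_mk, Prod.fst_zero] at h1
        rw [← Finset.sum_coe_sort T (fun i => mu i • v i)]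
        simpa [hmuT] using h1
      have hrel2 : ∑ i ∈ T, mu i = 0 := by
        have h2 := congrArg Prod.snd hrel
        rw [Prod.snd_sum] at h2
        simp only [Prod.smul_mk, Prod.snd_zero, smul_eq_mul, mul_one] at h2
        rw [← Finset.sum_coe_sort T (fun i => mu i)]
        simpa [hmuT] using h2
      have hmune : ∃ i ∈ T, mu i ≠ 0 := ⟨j0.1, j0.2, by rw [hmuT]; exact hj0⟩
      obtain ⟨m, hm1, hm2, hm3, hm4, hm5⟩ :
          ∃ m : Fin n → ℝ, (∀ i ∉ T, m i = 0) ∧ (∑ i ∈ T, m i • v i = 0) ∧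
            (∑ i ∈ T, m i = 0) ∧ (∃ i ∈ T, m i ≠ 0) ∧ (∑ i ∈ T, m i * c i ≤ 0) := by
        by_cases hsign : ∑ i ∈ T, mu i * c i ≤ 0
        · exact ⟨mu, hmusupp, hrel1, hrel2, hmune, hsign⟩
        · refine ⟨fun i => -mu i, fun i hi => by simp [hmusupp i hi], ?_, ?_, ?_, ?_⟩
          · simp only [neg_smul, Finset.sum_neg_distrib, hrel1, neg_zero]
          · simp only [Finset.sum_neg_distrib, hrel2, neg_zero]
          · obtain ⟨i, hi, hne⟩ := hmune
            exact ⟨i, hi, by simpa using hne⟩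
          · simp only [neg_mul, Finset.sum_neg_distrib]
            linarith
      have hneg : ∃ i ∈ T, m i < 0 := by
        by_contra hno
        push_neg at hno
        obtain ⟨i, hi, hne⟩ := hm4
        exact hne ((Finset.sum_eq_zero_iff_of_nonneg hno).mp hm3 i hi)
      set F := T.filter (fun i => m i < 0) with hF
      have hFne : F.Nonempty := by
        obtain ⟨i, hi, hlt⟩ := hneg
        exact ⟨i, Finset.mem_filter.mpr ⟨hi, hlt⟩⟩
      obtain ⟨i₀, hi₀F, hi₀inf⟩ := Finset.exists_mem_eq_inf' hFne (fun i => lam i / (-m i))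
      set t := F.inf' hFne (fun i => lam i / (-m i)) with ht
      have hi₀T : i₀ ∈ T := (Finset.mem_filter.mp hi₀F).1
      have hi₀neg : m i₀ < 0 := (Finset.mem_filter.mp hi₀F).2
      have htnn : 0 ≤ t := by
        rw [hi₀inf]
        exact div_nonneg (hlam0 i₀) (by linarith)
      have hkey : ∀ i ∈ F, t ≤ lam i / (-m i) := fun i hi => Finset.inf'_le _ hi
      set α : Fin n → ℝ := fun i => lam i + t * m i with hα
      have hα0 : ∀ i, 0 ≤ α i := by
        intro i
        by_cases hiT : i ∈ T
        · by_cases him : m i < 0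
          · have h1 := (le_div_iff₀ (by linarith : (0:ℝ) < -m i)).mp
              (hkey i (Finset.mem_filter.mpr ⟨hiT, him⟩))
            have h2 : t * m i = -(t * -m i) := by ring
            simp only [hα]
            linarith
          · push_neg at him
            exact add_nonneg (hlam0 i) (mul_nonneg htnn him)
        · simp only [hα, hsupp i hiT, hm1 i hiT, mul_zero, add_zero, le_refl]
      have hαi₀ : α i₀ = 0 := by
        have hne : m i₀ ≠ 0 := hi₀neg.ne
        have h3 : lam i₀ / (-m i₀) * m i₀ = -lam i₀ := by
          rw [div_mul_eq_mul_div, div_eq_iff (by simpa using hne)]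
          ring
        simp only [hα, hi₀inf]
        linarith [h3]
      have hαsupp' : ∀ i ∉ T.erase i₀, α i = 0 := by
        intro i hi
        by_cases h : i = i₀
        · rw [h]; exact hαi₀
        · have hiT : i ∉ T := fun hT => hi (Finset.mem_erase.mpr ⟨h, hT⟩)
          simp only [hα, hsupp i hiT, hm1 i hiT, mul_zero, add_zero]
      have hmuniv : ∑ i, m i = 0 := by
        rw [← Finset.sum_subset T.subset_univ (fun i _ hi => hm1 i hi)]
        exact hm3
      have hmvuniv : ∑ i, m i • v i = 0 := by
        rw [← Finset.sum_subset T.subset_univ (fun i _ hi => by rw [hm1 i hi, zero_smul])]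
        exact hm2
      have hmcuniv : ∑ i, m i * c i ≤ 0 := by
        rw [← Finset.sum_subset T.subset_univ (fun i _ hi => by rw [hm1 i hi, zero_mul])]
        exact hm5
      have hαsum : ∑ i, α i = ∑ i, lam i := by
        simp only [hα, Finset.sum_add_distrib, ← Finset.mul_sum, hmuniv, mul_zero, add_zero]
      have hαv : ∑ i, α i • v i = ∑ i, lam i • v i := by
        simp only [hα, add_smul, Finset.sum_add_distrib, mul_smul, ← Finset.smul_sum,
          hmvuniv, smul_zero, add_zero]
      have hαc : ∑ i, α i * c i ≤ ∑ i, lam i * c i := by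
        have : ∑ i, α i * c i = ∑ i, lam i * c i + t * ∑ i, m i * c i := by
          simp only [hα, add_mul, Finset.sum_add_distrib, ← Finset.mul_sum, mul_assoc]
        rw [this]
        nlinarith [mul_nonpos_of_nonneg_of_nonpos htnn hmcuniv]
      have hss : T.erase i₀ ⊂ T := Finset.erase_ssubset hi₀T
      obtain ⟨α', T', h1, h2, h3, h4, h5, h6, h7⟩ := ih _ hss α hα0 hαsupp'
      exact ⟨α', T', h1.trans (Finset.erase_subset _ _), h2, h3, h4,
        h5.trans hαsum, h6.trans hαv, h7.trans hαc⟩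


private lemma auxlim {a b C : ℝ} (h : ∀ t ∈ Set.Ioc (0:ℝ) 1, a + t * C ≤ b) : a ≤ b := by
  have h1 : Filter.Tendsto (fun t : ℝ => a + t * C) (nhdsWithin 0 (Set.Ioi 0)) (nhds a) := by
    have h2 : Filter.Tendsto (fun t : ℝ => a + t * C) (nhds 0) (nhds (a + 0 * C)) :=
      (continuous_const.add (continuous_id.mul continuous_const)).tendsto 0
    simpa using h2.mono_left nhdsWithin_le_nhds
  exact le_of_tendsto h1 (Filter.eventually_of_mem (Ioc_mem_nhdsGT one_pos) h)

set_option maxHeartbeats 1000000 in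
private lemma lemB {V : Type*} [NormedAddCommGroup V] [InnerProductSpace ℝ V]
    [FiniteDimensional ℝ V] {n : ℕ} (S : Finset (Fin n)) (K : Set V) (hK : Convex ℝ K)
    (hint : (interior K).Nonempty) {x₀ : V} (hx₀ : x₀ ∈ K)
    (f : Fin n → V → ℝ) (hf : ∀ i ∈ S, ConvexOn ℝ K (f i))
    (lam : Fin n → ℝ) (hlam : ∀ i ∈ S, 0 < lam i)
    (hmin : ∀ y ∈ K, ∑ i ∈ S, lam i * f i x₀ ≤ ∑ i ∈ S, lam i * f i y) :
    ∃ v : Fin n → V,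
      (∀ i ∈ S, ∀ y ∈ K, f i x₀ + ⟪v i, y - x₀⟫ ≤ f i y) ∧
      (∀ y ∈ K, 0 ≤ ⟪∑ i ∈ S, lam i • v i, y - x₀⟫) := by
  classical
  obtain ⟨z, hz⟩ := hint
  have hzK : z ∈ K := interior_subset hz
  -- the two convex sets to be separated, in (↥S → V) × ℝ
  set A : Set (({i // i ∈ S} → V) × ℝ) := {p | (∀ i, p.1 i ∈ interior K) ∧
    ∑ i : {i // i ∈ S}, lam i.1 * (f i.1 (p.1 i) - f i.1 x₀) < p.2} with hAdef
  set B : Set (({i // i ∈ S} → V) × ℝ) := {p | (∃ y ∈ K, p.1 = fun _ => y) ∧ p.2 ≤ 0} with hBdef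
  have hconvA : Convex ℝ A := by
    rintro p ⟨hp1, hp2⟩ q ⟨hq1, hq2⟩ a b ha hb hab
    constructor
    · intro i
      exact hK.interior (hp1 i) (hq1 i) ha hb hab
    · have hterm : ∀ i : {i // i ∈ S},
          lam i.1 * (f i.1 (a • p.1 i + b • q.1 i) - f i.1 x₀)
          ≤ a * (lam i.1 * (f i.1 (p.1 i) - f i.1 x₀))
            + b * (lam i.1 * (f i.1 (q.1 i) - f i.1 x₀)) := by
        intro i
        have hc := (hf i.1 i.2).2 (interior_subset (hp1 i)) (interior_subset (hq1 i)) ha hb hab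
        simp only [smul_eq_mul] at hc
        have hl : (0:ℝ) < lam i.1 := hlam i.1 i.2
        have h5 := mul_le_mul_of_nonneg_left hc hl.le
        have heq : a * (lam i.1 * f i.1 x₀) + b * (lam i.1 * f i.1 x₀) = lam i.1 * f i.1 x₀ := by
          linear_combination (lam i.1 * f i.1 x₀) * hab
        linarith [h5, heq]
      have hsum : ∑ i : {i // i ∈ S}, lam i.1 * (f i.1 ((a • p + b • q).1 i) - f i.1 x₀)
          ≤ a * (∑ i : {i // i ∈ S}, lam i.1 * (f i.1 (p.1 i) - f i.1 x₀))
            + b * (∑ i : {i // i ∈ S}, lam i.1 * (f i.1 (q.1 i) - f i.1 x₀)) := by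
        rw [Finset.mul_sum, Finset.mul_sum, ← Finset.sum_add_distrib]
        exact Finset.sum_le_sum fun i _ => hterm i
      have h2 : (a • p + b • q).2 = a * p.2 + b * q.2 := rfl
      rw [h2]
      rcases ha.eq_or_lt with hae | ha'
      · have hb1 : b = 1 := by linarith
        refine lt_of_le_of_lt hsum ?_
        rw [← hae, hb1]
        simpa using hq2
      · rcases hb.eq_or_lt with hbe | hb'
        · have ha1 : a = 1 := by linarith
          refine lt_of_le_of_lt hsum ?_
          rw [← hbe, ha1]
          simpa using hp2
        · refine lt_of_le_of_lt hsum ?_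
          exact add_lt_add_of_lt_of_le (mul_lt_mul_of_pos_left hp2 ha')
            (mul_le_mul_of_nonneg_left hq2.le hb)
  have hopenA : IsOpen A := by
    have hU : IsOpen {p : ({i // i ∈ S} → V) × ℝ | ∀ i, p.1 i ∈ interior K} := by
      have he : {p : ({i // i ∈ S} → V) × ℝ | ∀ i, p.1 i ∈ interior K}
          = Prod.fst ⁻¹' (Set.univ.pi fun _ : {i // i ∈ S} => interior K) := by
        ext p; simp [Set.mem_pi]
      rw [he]
      exact (isOpen_set_pi Set.finite_univ fun i _ => isOpen_interior).preimage continuous_fst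
    have hcont : ContinuousOn (fun p : ({i // i ∈ S} → V) × ℝ =>
        (∑ i : {i // i ∈ S}, lam i.1 * (f i.1 (p.1 i) - f i.1 x₀)) - p.2)
        {p | ∀ i, p.1 i ∈ interior K} := by
      apply ContinuousOn.sub ?_ continuous_snd.continuousOn
      apply continuousOn_finset_sum
      intro i _
      apply ContinuousOn.mul continuousOn_const
      apply ContinuousOn.sub ?_ continuousOn_const
      have hfc : ContinuousOn (f i.1) (interior K) :=
        (((hf i.1 i.2).subset interior_subset hK.interior)).continuousOn isOpen_interior
      exact hfc.comp (((continuous_apply i).comp continuous_fst).continuousOn) fun p hp => hp i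
    have he2 : A = {p : ({i // i ∈ S} → V) × ℝ | ∀ i, p.1 i ∈ interior K} ∩
        (fun p : ({i // i ∈ S} → V) × ℝ =>
          (∑ i : {i // i ∈ S}, lam i.1 * (f i.1 (p.1 i) - f i.1 x₀)) - p.2) ⁻¹' Set.Iio 0 := by
      ext p
      simp only [hAdef, Set.mem_setOf_eq, Set.mem_inter_iff, Set.mem_preimage, Set.mem_Iio,
        sub_neg]
    rw [he2]
    exact hcont.isOpen_inter_preimage hU isOpen_Iio
  have hconvB : Convex ℝ B := by
    rintro p ⟨⟨y₁, hy₁, hp1⟩, hp2⟩ q ⟨⟨y₂, hy₂, hq1⟩, hq2⟩ a b ha hb hab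
    refine ⟨⟨a • y₁ + b • y₂, hK hy₁ hy₂ ha hb hab, ?_⟩, ?_⟩
    · funext i
      show a • p.1 i + b • q.1 i = a • y₁ + b • y₂
      rw [hp1, hq1]
    · show a * p.2 + b * q.2 ≤ 0
      have h1 := mul_nonpos_of_nonneg_of_nonpos ha hp2
      have h2 := mul_nonpos_of_nonneg_of_nonpos hb hq2
      linarith
  have hdisj : Disjoint A B := by
    rw [Set.disjoint_left]
    rintro p ⟨hp1, hp2⟩ ⟨⟨y, hy, hpy⟩, hp2'⟩
    rw [hpy] at hp2
    have h0 : (0:ℝ) ≤ ∑ i : {i // i ∈ S}, lam i.1 * (f i.1 y - f i.1 x₀) := by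
      have e1 : ∑ i : {i // i ∈ S}, lam i.1 * (f i.1 y - f i.1 x₀)
          = ∑ i ∈ S, lam i * (f i y - f i x₀) :=
        Finset.sum_coe_sort S (fun i => lam i * (f i y - f i x₀))
      have e2 : ∑ i ∈ S, lam i * (f i y - f i x₀)
          = (∑ i ∈ S, lam i * f i y) - ∑ i ∈ S, lam i * f i x₀ := by
        rw [← Finset.sum_sub_distrib]
        exact Finset.sum_congr rfl fun i _ => mul_sub _ _ _
      rw [e1, e2]
      have := hmin y hy
      linarith
    linarith
  have hAne : A.Nonempty :=
    ⟨⟨fun _ => z, (∑ i : {i // i ∈ S}, lam i.1 * (f i.1 z - f i.1 x₀)) + 1⟩,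
      fun i => hz, lt_add_one _⟩
  obtain ⟨φ, u, hφA, hφB⟩ := geometric_hahn_banach_open hconvA hopenA hconvB hdisj
  -- decompose φ
  set L : {i // i ∈ S} → V →L[ℝ] ℝ := fun i =>
    φ.comp ((ContinuousLinearMap.inl ℝ ({i // i ∈ S} → V) ℝ).comp
      (LinearMap.toContinuousLinearMap (LinearMap.single ℝ (fun _ : {i // i ∈ S} => V) i))) with hL
  have hLapp : ∀ (i : {i // i ∈ S}) (w : V), L i w = φ (Pi.single i w, 0) := by
    intro i w
    simp only [hL, ContinuousLinearMap.comp_apply, ContinuousLinearMap.inl_apply,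
      LinearMap.coe_toContinuousLinearMap']
    rfl
  set sr := φ (0, 1) with hsr
  have hdecomp : ∀ (y : {i // i ∈ S} → V) (r : ℝ),
      φ (y, r) = (∑ i : {i // i ∈ S}, L i (y i)) + r * sr := by
    intro y r
    have h1 : ((y, r) : ({i // i ∈ S} → V) × ℝ)
        = (∑ i : {i // i ∈ S}, ((Pi.single i (y i), 0) : ({i // i ∈ S} → V) × ℝ)) + (0, r) := by
      have hfst : (∑ i : {i // i ∈ S},
          ((Pi.single i (y i), 0) : ({i // i ∈ S} → V) × ℝ)).1 = y := by
        rw [Prod.fst_sum]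
        exact Finset.univ_sum_single y
      have hsnd : (∑ i : {i // i ∈ S},
          ((Pi.single i (y i), 0) : ({i // i ∈ S} → V) × ℝ)).2 = 0 := by
        rw [Prod.snd_sum]
        exact Finset.sum_const_zero
      rw [Prod.ext_iff, Prod.fst_add, Prod.snd_add, hfst, hsnd]
      constructor
      · simp
      · simp
    rw [h1, map_add, map_sum]
    have h3 : φ ((0 : {i // i ∈ S} → V), r) = r * sr := by
      have h2 : ((0, r) : ({i // i ∈ S} → V) × ℝ) = r • ((0, 1) : ({i // i ∈ S} → V) × ℝ) := by
        simp [Prod.smul_mk]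
      rw [h2, map_smul, smul_eq_mul, hsr]
    rw [h3]
    congr 1
  have hAineq : ∀ (y : {i // i ∈ S} → V), (∀ i, y i ∈ interior K) →
      ∀ r, (∑ i : {i // i ∈ S}, lam i.1 * (f i.1 (y i) - f i.1 x₀)) < r →
      (∑ i : {i // i ∈ S}, L i (y i)) + r * sr < u := by
    intro y hy r hr
    have := hφA (y, r) ⟨hy, hr⟩
    rwa [hdecomp] at this
  have hBineq : ∀ y ∈ K, ∀ r ≤ (0:ℝ), u ≤ (∑ i : {i // i ∈ S}, L i y) + r * sr := by
    intro y hy r hr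
    have := hφB ((fun _ => y), r) ⟨⟨y, hy, rfl⟩, hr⟩
    rwa [hdecomp] at this
  -- the last coefficient is negative
  have hsrle : sr ≤ 0 := by
    by_contra hpos
    push_neg at hpos
    set C := ∑ i : {i // i ∈ S}, L i x₀ with hC
    set r := min 0 ((u - C - 1)/sr) with hr
    have hr0 : r ≤ 0 := min_le_left _ _
    have h1 := hBineq x₀ hx₀ r hr0
    have h2 : r * sr ≤ u - C - 1 := by
      have : r ≤ (u - C - 1)/sr := min_le_right _ _
      exact (le_div_iff₀ hpos).mp this
    linarith
  have hsrne : sr ≠ 0 := by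
    intro h0
    have h1 := hAineq (fun _ => z) (fun _ => hz)
      ((∑ i : {i // i ∈ S}, lam i.1 * (f i.1 z - f i.1 x₀)) + 1) (lt_add_one _)
    have h2 := hBineq z hzK 0 le_rfl
    rw [h0] at h1 h2
    simp only [mul_zero, add_zero, zero_mul] at h1 h2
    linarith
  have hsrneg : sr < 0 := lt_of_le_of_ne hsrle hsrne
  set cst : ℝ := -sr⁻¹ with hcst
  have hcpos : 0 < cst := by
    rw [hcst]
    have := inv_lt_zero.mpr hsrneg
    linarith
  have hcsr : cst * sr = -1 := by
    rw [hcst]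
    field_simp
  set M : {i // i ∈ S} → V →L[ℝ] ℝ := fun i => cst • L i with hM
  have hMapp : ∀ (i : {i // i ∈ S}) (w : V), M i w = cst * L i w := by
    intro i w
    simp [hM]
  set ψ : V → ℝ := fun w => ∑ i : {i // i ∈ S}, M i w with hψ
  have hML : ∀ (g : {i // i ∈ S} → V),
      ∑ i : {i // i ∈ S}, M i (g i) = cst * ∑ i : {i // i ∈ S}, L i (g i) := by
    intro g
    rw [Finset.mul_sum]
    exact Finset.sum_congr rfl fun i _ => hMapp i (g i)
  set u0 : ℝ := cst * u with hu0
  have hA2 : ∀ (y : {i // i ∈ S} → V), (∀ i, y i ∈ interior K) →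
      (∑ i : {i // i ∈ S}, M i (y i))
        - (∑ i : {i // i ∈ S}, lam i.1 * (f i.1 (y i) - f i.1 x₀)) ≤ u0 := by
    intro y hy
    set F := ∑ i : {i // i ∈ S}, lam i.1 * (f i.1 (y i) - f i.1 x₀) with hF
    refine le_of_forall_pos_le_add fun ε hε => ?_
    have h1 := hAineq y hy (F + ε) (lt_add_of_pos_right _ hε)
    have h2 := mul_lt_mul_of_pos_left h1 hcpos
    have h3 : cst * ((∑ i : {i // i ∈ S}, L i (y i)) + (F + ε) * sr)
        = cst * (∑ i : {i // i ∈ S}, L i (y i)) - (F + ε) := by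
      linear_combination (F + ε) * hcsr
    rw [h3, ← hML y] at h2
    linarith
  have hB2 : ∀ y ∈ K, u0 ≤ ψ y := by
    intro y hy
    have h1 := hBineq y hy 0 le_rfl
    rw [zero_mul, add_zero] at h1
    have h2 := mul_le_mul_of_nonneg_left h1 hcpos.le
    rw [← hML (fun _ => y)] at h2
    exact h2
  -- segment lemmas
  have hLseg : ∀ (ℓ : V →L[ℝ] ℝ) (x : V) (t : ℝ), ℓ (x + t • (z - x)) = ℓ x + t * (ℓ z - ℓ x) := by
    intro ℓ x t
    rw [map_add, map_smul, map_sub]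
    simp [smul_eq_mul]
  have hfseg : ∀ i ∈ S, ∀ x ∈ K, ∀ t ∈ Set.Ioc (0:ℝ) 1,
      f i (x + t • (z - x)) ≤ f i x + t * (f i z - f i x) := by
    intro i hi x hx t ⟨ht0, ht1⟩
    have he : x + t • (z - x) = (1 - t) • x + t • z := by
      rw [smul_sub, sub_smul, one_smul]
      abel
    rw [he]
    have hc := (hf i hi).2 hx hzK (by linarith : (0:ℝ) ≤ 1 - t) ht0.le (by ring)
    simp only [smul_eq_mul] at hc
    nlinarith [hc]
  have hψseg : ∀ (x : V) (t : ℝ), ψ (x + t • (z - x)) = ψ x + t * (ψ z - ψ x) := by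
    intro x t
    simp only [hψ]
    rw [Finset.sum_congr rfl fun i (_ : i ∈ Finset.univ) => hLseg (M i) x t]
    rw [Finset.sum_add_distrib, ← Finset.mul_sum, Finset.sum_sub_distrib]
  -- u0 = ψ x₀
  have hu1 : u0 ≤ ψ x₀ := hB2 x₀ hx₀
  have hu2 : ψ x₀ ≤ u0 := by
    apply auxlim (C := (ψ z - ψ x₀) - ∑ i : {i // i ∈ S}, lam i.1 * (f i.1 z - f i.1 x₀))
    intro t ⟨ht0, ht1⟩
    have hyt : x₀ + t • (z - x₀) ∈ interior K := hK.add_smul_sub_mem_interior hx₀ hz ⟨ht0, ht1⟩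
    have h1 := hA2 (fun _ => x₀ + t • (z - x₀)) (fun _ => hyt)
    have h2 : ∑ i : {i // i ∈ S}, M i (x₀ + t • (z - x₀)) = ψ x₀ + t * (ψ z - ψ x₀) :=
      hψseg x₀ t
    have h3 : ∑ i : {i // i ∈ S}, lam i.1 * (f i.1 (x₀ + t • (z - x₀)) - f i.1 x₀)
        ≤ t * ∑ i : {i // i ∈ S}, lam i.1 * (f i.1 z - f i.1 x₀) := by
      rw [Finset.mul_sum]
      refine Finset.sum_le_sum fun i _ => ?_
      have hfs := hfseg i.1 i.2 x₀ hx₀ t ⟨ht0, ht1⟩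
      have hl := (hlam i.1 i.2).le
      nlinarith [hfs, hl]
    rw [h2] at h1
    linarith
  have hupsi : ψ x₀ = u0 := le_antisymm hu2 hu1
  -- key subgradient inequality on the interior
  have hkey : ∀ (i₀ : {i // i ∈ S}), ∀ y ∈ interior K,
      M i₀ y - lam i₀.1 * (f i₀.1 y - f i₀.1 x₀) ≤ M i₀ x₀ := by
    intro i₀ y hy
    have hsplit : ∀ (G : {i // i ∈ S} → ℝ),
        ∑ i : {i // i ∈ S}, G i = G i₀ + ∑ i ∈ Finset.univ.erase i₀, G i :=
      fun G => (Finset.add_sum_erase _ G (Finset.mem_univ i₀)).symm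
    have haux : M i₀ y - lam i₀.1 * (f i₀.1 y - f i₀.1 x₀)
        + ∑ i ∈ Finset.univ.erase i₀, M i x₀ ≤ u0 := by
      apply auxlim (C := ∑ i ∈ Finset.univ.erase i₀,
        ((M i z - M i x₀) - lam i.1 * (f i.1 z - f i.1 x₀)))
      intro t ⟨ht0, ht1⟩
      set yt := x₀ + t • (z - x₀) with hyt
      have hytK : yt ∈ interior K := hK.add_smul_sub_mem_interior hx₀ hz ⟨ht0, ht1⟩
      set Y : {i // i ∈ S} → V := fun i => if i = i₀ then y else yt with hY
      have hYint : ∀ i, Y i ∈ interior K := by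
        intro i
        by_cases h : i = i₀ <;> simp [hY, h, hy, hytK]
      have h1 := hA2 Y hYint
      have e1 : ∑ i : {i // i ∈ S}, M i (Y i)
          = M i₀ y + ∑ i ∈ Finset.univ.erase i₀, M i yt := by
        rw [hsplit (fun i => M i (Y i))]
        congr 1
        · simp [hY]
        · exact Finset.sum_congr rfl fun i hi => by simp [hY, (Finset.mem_erase.mp hi).1]
      have e2 : ∑ i : {i // i ∈ S}, lam i.1 * (f i.1 (Y i) - f i.1 x₀)
          = lam i₀.1 * (f i₀.1 y - f i₀.1 x₀)
            + ∑ i ∈ Finset.univ.erase i₀, lam i.1 * (f i.1 yt - f i.1 x₀) := by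
        rw [hsplit (fun i => lam i.1 * (f i.1 (Y i) - f i.1 x₀))]
        congr 1
        · simp [hY]
        · exact Finset.sum_congr rfl fun i hi => by simp [hY, (Finset.mem_erase.mp hi).1]
      rw [e1, e2] at h1
      have hs1 : ∑ i ∈ Finset.univ.erase i₀, M i yt
          = ∑ i ∈ Finset.univ.erase i₀, M i x₀
            + t * ∑ i ∈ Finset.univ.erase i₀, (M i z - M i x₀) := by
        rw [Finset.sum_congr rfl fun i (_ : i ∈ Finset.univ.erase i₀) => hLseg (M i) x₀ t]
        rw [Finset.sum_add_distrib, ← Finset.mul_sum]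
      have hs2 : ∑ i ∈ Finset.univ.erase i₀, lam i.1 * (f i.1 yt - f i.1 x₀)
          ≤ t * ∑ i ∈ Finset.univ.erase i₀, lam i.1 * (f i.1 z - f i.1 x₀) := by
        rw [Finset.mul_sum]
        refine Finset.sum_le_sum fun i _ => ?_
        have hfs := hfseg i.1 i.2 x₀ hx₀ t ⟨ht0, ht1⟩
        have hl := (hlam i.1 i.2).le
        nlinarith [hfs, hl]
      rw [hs1] at h1
      have hexp : t * ∑ i ∈ Finset.univ.erase i₀,
          ((M i z - M i x₀) - lam i.1 * (f i.1 z - f i.1 x₀))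
          = t * ∑ i ∈ Finset.univ.erase i₀, (M i z - M i x₀)
            - t * ∑ i ∈ Finset.univ.erase i₀, lam i.1 * (f i.1 z - f i.1 x₀) := by
        rw [Finset.sum_sub_distrib, mul_sub]
      linarith
    have hx0split : ∑ i : {i // i ∈ S}, M i x₀
        = M i₀ x₀ + ∑ i ∈ Finset.univ.erase i₀, M i x₀ := hsplit _
    have hψx0 : ψ x₀ = ∑ i : {i // i ∈ S}, M i x₀ := rfl
    linarith [hupsi, hx0split, hψx0]
  -- extend to all of K
  have hkeyK : ∀ (i₀ : {i // i ∈ S}), ∀ y ∈ K,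
      M i₀ y - lam i₀.1 * (f i₀.1 y - f i₀.1 x₀) ≤ M i₀ x₀ := by
    intro i₀ y hy
    apply auxlim (C := (M i₀ z - M i₀ y) - lam i₀.1 * (f i₀.1 z - f i₀.1 y))
    intro t ⟨ht0, ht1⟩
    have hyt : y + t • (z - y) ∈ interior K := hK.add_smul_sub_mem_interior hy hz ⟨ht0, ht1⟩
    have h1 := hkey i₀ _ hyt
    have h2 := hfseg i₀.1 i₀.2 y hy t ⟨ht0, ht1⟩
    have h3 := hLseg (M i₀) y t
    have hl := (hlam i₀.1 i₀.2).le
    rw [h3] at h1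
    nlinarith [mul_le_mul_of_nonneg_left h2 hl]
  -- construct the subgradients
  set v : Fin n → V := fun i => if h : i ∈ S then
    (lam i)⁻¹ • ((InnerProductSpace.toDual ℝ V).symm (M ⟨i, h⟩)) else 0 with hv
  have hvinner : ∀ (i : {i // i ∈ S}) (w : V), ⟪v i.1, w⟫ = (lam i.1)⁻¹ * (M i w) := by
    rintro ⟨i, hi⟩ w
    simp only [hv, dif_pos hi]
    rw [real_inner_smul_left, InnerProductSpace.toDual_symm_apply]
  refine ⟨v, ?_, ?_⟩
  · intro i hi y hy
    have h1 := hkeyK ⟨i, hi⟩ y hy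
    have hvi := hvinner ⟨i, hi⟩ (y - x₀)
    rw [map_sub] at hvi
    have hl : (0:ℝ) < lam i := hlam i hi
    have h2 : (lam i)⁻¹ * (M ⟨i, hi⟩ y - M ⟨i, hi⟩ x₀) ≤ f i y - f i x₀ := by
      have h3 : M ⟨i, hi⟩ y - M ⟨i, hi⟩ x₀ ≤ lam i * (f i y - f i x₀) := by linarith
      have h4 := mul_le_mul_of_nonneg_left h3 (inv_nonneg.mpr hl.le)
      rwa [inv_mul_cancel_left₀ hl.ne'] at h4
    rw [hvi] at *
    linarith
  · intro y hy
    have e1 : ⟪∑ i ∈ S, lam i • v i, y - x₀⟫ = ∑ i ∈ S, lam i * ⟪v i, y - x₀⟫ := by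
      rw [sum_inner]
      exact Finset.sum_congr rfl fun i _ => real_inner_smul_left _ _ _
    rw [e1]
    have e2 : ∑ i ∈ S, lam i * ⟪v i, y - x₀⟫ = ∑ i : {i // i ∈ S}, (M i y - M i x₀) := by
      rw [← Finset.sum_coe_sort S (fun i => lam i * ⟪v i, y - x₀⟫)]
      refine Finset.sum_congr rfl fun i _ => ?_
      rw [hvinner i (y - x₀), map_sub, mul_inv_cancel_left₀ (hlam i.1 i.2).ne']
    rw [e2, Finset.sum_sub_distrib]
    have h1 := hB2 y hy
    have hψy : ψ y = ∑ i : {i // i ∈ S}, M i y := rfl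
    have hψx0 : ψ x₀ = ∑ i : {i // i ∈ S}, M i x₀ := rfl
    linarith [hupsi, h1, hψy, hψx0]


set_option maxHeartbeats 1000000 in
theorem caratheodory_for_convex_functions
    (d n : ℕ) (K : Set (EuclideanSpace ℝ (Fin d)))
    (hKc : IsClosed K) (hKconv : Convex ℝ K)
    (f : Fin n → EuclideanSpace ℝ (Fin d) → ℝ)
    (hf : ∀ i, StrictConvexOn ℝ K (f i))
    (hattain : ∀ i, ∃ x ∈ K, ∀ y ∈ K, f i x ≤ f i y)
    (lam : Fin n → ℝ) (hlam : ∀ i, 0 ≤ lam i) (hlamsum : ∑ i, lam i = 1)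
    (g : EuclideanSpace ℝ (Fin d) → ℝ) (hg : ∀ x, g x = ∑ i, lam i * f i x) :
    ∃ (s : Finset (Fin n)) (α : Fin n → ℝ),
      s.card ≤ d + 1 ∧ (∀ i, 0 ≤ α i) ∧ (∀ i ∉ s, α i = 0) ∧ (∑ i, α i = 1) ∧
      ∀ x ∈ K, IsMinOn g K x →
        (IsMinOn (fun y => ∑ i, α i * f i y) K x ∧ (∑ i, α i * f i x) ≤ g x) := by
  classical
  have hn : 0 < n := by
    rcases Nat.eq_zero_or_pos n with h | h
    · subst h; simp at hlamsum
    · exact h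
  by_cases hex : ∃ x ∈ K, IsMinOn g K x
  swap
  · refine ⟨{⟨0, hn⟩}, fun i => if i = ⟨0, hn⟩ then 1 else 0, ?_, ?_, ?_, ?_, ?_⟩
    · simp
    · intro i; by_cases h : i = ⟨0, hn⟩ <;> simp [h]
    · intro i hi
      simp only [Finset.mem_singleton] at hi
      simp [hi]
    · simp
    · intro x hx hmin; exact absurd ⟨x, hx, hmin⟩ hex
  obtain ⟨x₀, hx₀K, hx₀min⟩ := hex
  set S : Finset (Fin n) := Finset.univ.filter (fun i => 0 < lam i) with hS
  have hSlam : ∀ i ∈ S, 0 < lam i := fun i hi => (Finset.mem_filter.mp hi).2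
  have hSzero : ∀ i ∉ S, lam i = 0 := by
    intro i hi
    rw [hS, Finset.mem_filter] at hi
    push_neg at hi
    exact le_antisymm (hi (Finset.mem_univ i)) (hlam i)
  have hsum_eq : ∀ (F : Fin n → ℝ), ∑ i ∈ S, lam i * F i = ∑ i, lam i * F i := by
    intro F
    rw [hS]
    apply Finset.sum_filter_of_ne
    intro i _ hne
    by_contra h
    push_neg at h
    have h0 : lam i = 0 := le_antisymm h (hlam i)
    exact hne (by rw [h0, zero_mul])
  -- orthogonal projection onto the affine span of K
  set A : AffineSubspace ℝ (EuclideanSpace ℝ (Fin d)) := affineSpan ℝ K with hA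
  haveI : Nonempty A := ⟨⟨x₀, subset_affineSpan ℝ K hx₀K⟩⟩
  set Q : EuclideanSpace ℝ (Fin d) →ᵃ[ℝ] EuclideanSpace ℝ (Fin d) :=
    A.subtype.comp (EuclideanGeometry.orthogonalProjection A) with hQ
  have hQapp : ∀ x, Q x = ↑(EuclideanGeometry.orthogonalProjection A x) := fun x => rfl
  have hQK : ∀ y ∈ K, Q y = y := by
    intro y hy
    rw [hQapp]
    exact EuclideanGeometry.orthogonalProjection_eq_self_iff.mpr (subset_affineSpan ℝ K hy)
  set Kt : Set (EuclideanSpace ℝ (Fin d)) := Q ⁻¹' K with hKt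
  have hKtconv : Convex ℝ Kt := hKconv.affine_preimage Q
  have hKsub : K ⊆ Kt := by
    intro y hy
    show Q y ∈ K
    rw [hQK y hy]; exact hy
  have hx₀t : x₀ ∈ Kt := hKsub hx₀K
  have hperp : ∀ w ∈ A.directionᗮ, ∀ y ∈ K, w +ᵥ y ∈ Kt := by
    intro w hw y hy
    show Q (w +ᵥ y) ∈ K
    rw [hQapp, EuclideanGeometry.orthogonalProjection_vadd_eq_self (subset_affineSpan ℝ K hy) hw]
    exact hy
  have hspan : affineSpan ℝ Kt = ⊤ := by
    have h1 : A ≤ affineSpan ℝ Kt := affineSpan_mono ℝ hKsub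
    have hx₀' : x₀ ∈ affineSpan ℝ Kt := subset_affineSpan ℝ Kt hx₀t
    have hdir : (affineSpan ℝ Kt).direction = ⊤ := by
      rw [eq_top_iff, ← Submodule.sup_orthogonal_of_hasOrthogonalProjection (K := A.direction)]
      apply sup_le
      · exact AffineSubspace.direction_le h1
      · intro w hw
        have h2 : w +ᵥ x₀ ∈ affineSpan ℝ Kt := subset_affineSpan ℝ Kt (hperp w hw x₀ hx₀K)
        have h3 := AffineSubspace.vsub_mem_direction h2 hx₀'
        simpa using h3
    rw [eq_top_iff]
    intro p _
    have hmem : p -ᵥ x₀ ∈ (affineSpan ℝ Kt).direction := by rw [hdir]; trivial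
    have := AffineSubspace.vadd_mem_of_mem_direction hmem hx₀'
    simpa [vsub_vadd] using this
  have hint : (interior Kt).Nonempty := hKtconv.interior_nonempty_iff_affineSpan_eq_top.mpr hspan
  -- fattened functions
  set N : EuclideanSpace ℝ (Fin d) → ℝ := fun x => ‖x - Q x‖ with hN
  have hNconv : ConvexOn ℝ Kt N := by
    refine ⟨hKtconv, ?_⟩
    intro x hx y hy a b ha hb hab
    have hQc : Q (a • x + b • y) = a • Q x + b • Q y := Convex.combo_affine_apply hab
    have he : (a • x + b • y) - Q (a • x + b • y) = a • (x - Q x) + b • (y - Q y) := by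
      rw [hQc, smul_sub, smul_sub]
      abel
    simp only [hN, smul_eq_mul]
    rw [he]
    calc ‖a • (x - Q x) + b • (y - Q y)‖ ≤ ‖a • (x - Q x)‖ + ‖b • (y - Q y)‖ := norm_add_le _ _
      _ = a * ‖x - Q x‖ + b * ‖y - Q y‖ := by
          rw [norm_smul, norm_smul, Real.norm_eq_abs, Real.norm_eq_abs,
            abs_of_nonneg ha, abs_of_nonneg hb]
  set ft : Fin n → EuclideanSpace ℝ (Fin d) → ℝ := fun i x => f i (Q x) + N x with hft
  have hftconv : ∀ i ∈ S, ConvexOn ℝ Kt (ft i) := by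
    intro i _
    exact (((hf i).convexOn).comp_affineMap Q).add hNconv
  have hfteq : ∀ i, ∀ y ∈ K, ft i y = f i y := by
    intro i y hy
    simp only [hft, hN, hQK y hy, sub_self, norm_zero, add_zero]
  have hgmin : ∀ y ∈ K, g x₀ ≤ g y := fun y hy => isMinOn_iff.mp hx₀min y hy
  have hmint : ∀ y ∈ Kt, ∑ i ∈ S, lam i * ft i x₀ ≤ ∑ i ∈ S, lam i * ft i y := by
    intro y hy
    have hQyK : Q y ∈ K := hy
    have e1 : ∑ i ∈ S, lam i * ft i x₀ = ∑ i, lam i * f i x₀ := by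
      rw [Finset.sum_congr rfl fun i hi => by rw [hfteq i x₀ hx₀K]]
      exact hsum_eq _
    have e2 : ∑ i ∈ S, lam i * ft i y
        = ∑ i ∈ S, lam i * f i (Q y) + (∑ i ∈ S, lam i) * N y := by
      rw [Finset.sum_mul]
      rw [← Finset.sum_add_distrib]
      exact Finset.sum_congr rfl fun i _ => by simp only [hft]; ring
    have h3 : ∑ i ∈ S, lam i * f i (Q y) = ∑ i, lam i * f i (Q y) := hsum_eq _
    have h4 : 0 ≤ (∑ i ∈ S, lam i) * N y :=
      mul_nonneg (Finset.sum_nonneg fun i _ => hlam i) (norm_nonneg _)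
    have h5 := hgmin (Q y) hQyK
    rw [hg, hg] at h5
    rw [e1, e2, h3]
    linarith
  obtain ⟨v, hv1, hv2⟩ := lemB S Kt hKtconv hint hx₀t ft hftconv lam hSlam hmint
  have hsub : ∀ i ∈ S, ∀ y ∈ K, f i x₀ + ⟪v i, y - x₀⟫ ≤ f i y := by
    intro i hi y hy
    have := hv1 i hi y (hKsub hy)
    rwa [hfteq i x₀ hx₀K, hfteq i y hy] at this
  have hopt : ∀ y ∈ K, 0 ≤ ⟪∑ i ∈ S, lam i • v i, y - x₀⟫ := fun y hy => hv2 y (hKsub hy)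
  obtain ⟨α, T, hTS, hTcard, hα0, hαsupp, hαsum, hαv, hαc⟩ :=
    lemC v (fun i => f i x₀) S lam hlam hSzero
  refine ⟨T, α, ?_, hα0, hαsupp, by rw [hαsum]; exact hlamsum, ?_⟩
  · rwa [finrank_euclideanSpace_fin] at hTcard
  intro x hxK hxmin
  -- uniqueness of the minimizer
  have hj : ∃ j, 0 < lam j := by
    by_contra h
    push_neg at h
    have h0 : ∀ i, lam i = 0 := fun i => le_antisymm (h i) (hlam i)
    simp [h0] at hlamsum
  obtain ⟨j, hjpos⟩ := hj
  have hxx₀ : x = x₀ := by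
    by_contra hne
    set m := (1/2 : ℝ) • x + (1/2 : ℝ) • x₀ with hm
    have hmK : m ∈ K := hKconv hxK hx₀K (by norm_num) (by norm_num) (by norm_num)
    have hterm : ∀ i, lam i * f i m ≤ lam i * ((1/2) * f i x + (1/2) * f i x₀) := by
      intro i
      apply mul_le_mul_of_nonneg_left ?_ (hlam i)
      have hc := ((hf i).convexOn).2 hxK hx₀K (by norm_num : (0:ℝ) ≤ 1/2)
        (by norm_num : (0:ℝ) ≤ 1/2) (by norm_num)
      simpa [smul_eq_mul, hm, one_div] using hc
    have hj2 : lam j * f j m < lam j * ((1/2) * f j x + (1/2) * f j x₀) := by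
      apply mul_lt_mul_of_pos_left ?_ hjpos
      have hc := (hf j).2 hxK hx₀K hne (by norm_num : (0:ℝ) < 1/2)
        (by norm_num : (0:ℝ) < 1/2) (by norm_num)
      simpa [smul_eq_mul, hm, one_div] using hc
    have hlt : g m < (1/2) * g x + (1/2) * g x₀ := by
      rw [hg, hg, hg]
      calc ∑ i, lam i * f i m
          < ∑ i, lam i * ((1/2) * f i x + (1/2) * f i x₀) :=
            Finset.sum_lt_sum (fun i _ => hterm i) ⟨j, Finset.mem_univ j, hj2⟩
        _ = (1/2) * ∑ i, lam i * f i x + (1/2) * ∑ i, lam i * f i x₀ := by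
            rw [Finset.mul_sum, Finset.mul_sum, ← Finset.sum_add_distrib]
            exact Finset.sum_congr rfl fun i _ => by ring
    have h1 := isMinOn_iff.mp hxmin m hmK
    have h2 := isMinOn_iff.mp hx₀min m hmK
    linarith
  constructor
  · rw [hxx₀, isMinOn_iff]
    intro y hy
    have c1 : ∑ i ∈ T, α i * f i y = ∑ i, α i * f i y :=
      Finset.sum_subset (Finset.subset_univ T) fun i _ hi => by rw [hαsupp i hi, zero_mul]
    have c2 : ∑ i ∈ T, α i * f i x₀ = ∑ i, α i * f i x₀ :=
      Finset.sum_subset (Finset.subset_univ T) fun i _ hi => by rw [hαsupp i hi, zero_mul]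
    have c3 : ∀ i ∈ T, α i * (f i x₀ + ⟪v i, y - x₀⟫) ≤ α i * f i y :=
      fun i hi => mul_le_mul_of_nonneg_left (hsub i (hTS hi) y hy) (hα0 i)
    have c4 : ∑ i ∈ T, α i * (f i x₀ + ⟪v i, y - x₀⟫)
        = ∑ i ∈ T, α i * f i x₀ + ⟪∑ i ∈ T, α i • v i, y - x₀⟫ := by
      rw [sum_inner, ← Finset.sum_add_distrib]
      exact Finset.sum_congr rfl fun i _ => by rw [real_inner_smul_left]; ring
    have c5 : ∑ i ∈ T, α i • v i = ∑ i ∈ S, lam i • v i := by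
      rw [Finset.sum_subset (Finset.subset_univ T) fun i _ hi => by
        rw [hαsupp i hi, zero_smul]]
      rw [hαv]
      exact (Finset.sum_subset (Finset.subset_univ S) fun i _ hi => by
        rw [hSzero i hi, zero_smul]).symm
    have c6 := hopt y hy
    have c7 : (0:ℝ) ≤ ⟪∑ i ∈ T, α i • v i, y - x₀⟫ := by rw [c5]; exact c6
    calc ∑ i, α i * f i x₀ = ∑ i ∈ T, α i * f i x₀ := c2.symm
      _ ≤ ∑ i ∈ T, α i * f i x₀ + ⟪∑ i ∈ T, α i • v i, y - x₀⟫ := le_add_of_nonneg_right c7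
      _ = ∑ i ∈ T, α i * (f i x₀ + ⟪v i, y - x₀⟫) := c4.symm
      _ ≤ ∑ i ∈ T, α i * f i y := Finset.sum_le_sum c3
      _ = ∑ i, α i * f i y := c1
  · rw [hxx₀, hg]
    exact hαc
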